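/- The internal information cost of a deterministic-turn, private-coin communication protocol is at most its communication complexity: I(X; Π | Y) + I(Y; Π | X) ≤ |Π|, where |Π| is the maximum number of bits transmitted. -/

import Mathlib

open scoped Classical
open Finset

/-- Shannon entropy (base 2) of a pmf on a finite type. -/
noncomputable def entH {α : Type*} [Fintype α] (p : α → ℝ) : ℝ :=
  -∑ x, p x * Real.logb 2 (p x)

/-- Kullback-Leibler divergence (base 2) between pmfs on a finite type. -/
noncomputable def klD {α : Type*} [Fintype α] (p q : α → ℝ) : ℝ :=
  ∑ x, p x * Real.logb 2 (p x / q x)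

/-- Distribution of a random variable `f` on a finite sample space with pmf `μ`. -/
noncomputable def distOf {Ω α : Type*} [Fintype Ω] [Fintype α] (μ : Ω → ℝ) (f : Ω → α) : α → ℝ :=
  fun x => ∑ ω, if f ω = x then μ ω else 0

/-- Entropy of a random variable. -/
noncomputable def rvH {Ω α : Type*} [Fintype Ω] [Fintype α] (μ : Ω → ℝ) (f : Ω → α) : ℝ :=
  entH (distOf μ f)

/-- Conditional entropy H(f | g). -/
noncomputable def condEnt {Ω α β : Type*} [Fintype Ω] [Fintype α] [Fintype β]
    (μ : Ω → ℝ) (f : Ω → α) (g : Ω → β) : ℝ :=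
  rvH μ (fun ω => (f ω, g ω)) - rvH μ g

/-- Conditional mutual information I(A ; B | C). -/
noncomputable def cMI {Ω α β γ : Type*} [Fintype Ω] [Fintype α] [Fintype β] [Fintype γ]
    (μ : Ω → ℝ) (A : Ω → α) (B : Ω → β) (C : Ω → γ) : ℝ :=
  condEnt μ A C - condEnt μ A (fun ω => (B ω, C ω))


section Aux

variable {Ω : Type*} [Fintype Ω]

lemma distOf_nonneg {α : Type*} [Fintype α] {μ : Ω → ℝ} (hμ : ∀ ω, 0 ≤ μ ω)
    (f : Ω → α) (x : α) : 0 ≤ distOf μ f x := by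
  refine Finset.sum_nonneg fun ω _ => ?_
  split <;> simp [hμ ω]

lemma le_distOf {α : Type*} [Fintype α] {μ : Ω → ℝ} (hμ : ∀ ω, 0 ≤ μ ω)
    (f : Ω → α) (ω : Ω) : μ ω ≤ distOf μ f (f ω) := by
  have h := Finset.single_le_sum (f := fun ω' => if f ω' = f ω then μ ω' else 0)
    (fun ω' _ => by split <;> simp [hμ ω']) (Finset.mem_univ ω)
  simpa [distOf] using h

lemma sum_distOf {α : Type*} [Fintype α] (μ : Ω → ℝ) (f : Ω → α) :
    ∑ x, distOf μ f x = ∑ ω, μ ω := by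
  unfold distOf
  rw [Finset.sum_comm]
  exact Finset.sum_congr rfl fun ω _ => by simp

lemma rvH_eq_sum {α : Type*} [Fintype α] (μ : Ω → ℝ) (f : Ω → α) :
    rvH μ f = -∑ ω, μ ω * Real.logb 2 (distOf μ f (f ω)) := by
  unfold rvH entH
  congr 1
  calc ∑ x, distOf μ f x * Real.logb 2 (distOf μ f x)
      = ∑ x, ∑ ω, (if f ω = x then μ ω * Real.logb 2 (distOf μ f x) else 0) := by
        refine Finset.sum_congr rfl fun x _ => ?_
        rw [distOf, Finset.sum_mul]
        exact Finset.sum_congr rfl fun ω _ => by split <;> simp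
    _ = ∑ ω, ∑ x, (if f ω = x then μ ω * Real.logb 2 (distOf μ f x) else 0) :=
        Finset.sum_comm
    _ = ∑ ω, μ ω * Real.logb 2 (distOf μ f (f ω)) := by
        refine Finset.sum_congr rfl fun ω _ => ?_
        simp

lemma rvH_congr {α β : Type*} [Fintype α] [Fintype β] (μ : Ω → ℝ) {f : Ω → α} {g : Ω → β}
    (h : ∀ ω ω', f ω = f ω' ↔ g ω = g ω') : rvH μ f = rvH μ g := by
  rw [rvH_eq_sum, rvH_eq_sum]
  congr 1
  refine Finset.sum_congr rfl fun ω _ => ?_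
  have hd : distOf μ f (f ω) = distOf μ g (g ω) := by
    unfold distOf
    refine Finset.sum_congr rfl fun ω' _ => ?_
    rw [show (f ω' = f ω) = (g ω' = g ω) from propext (h ω' ω)]
  rw [hd]

lemma condEnt_nonneg {α β : Type*} [Fintype α] [Fintype β] {μ : Ω → ℝ} (hμ : ∀ ω, 0 ≤ μ ω)
    (B : Ω → α) (Z : Ω → β) : 0 ≤ condEnt μ B Z := by
  unfold condEnt
  rw [rvH_eq_sum, rvH_eq_sum, sub_nonneg, neg_le_neg_iff]
  refine Finset.sum_le_sum fun ω _ => ?_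
  rcases eq_or_lt_of_le (hμ ω) with h0 | h0
  · rw [← h0]; simp
  refine mul_le_mul_of_nonneg_left ?_ (hμ ω)
  have hle : distOf μ (fun ω => (B ω, Z ω)) (B ω, Z ω) ≤ distOf μ Z (Z ω) := by
    refine Finset.sum_le_sum fun ω' _ => ?_
    by_cases h : (B ω', Z ω') = (B ω, Z ω)
    · rw [if_pos h, if_pos (congrArg Prod.snd h)]
    · rw [if_neg h]; split <;> simp [hμ ω']
  have hpos : 0 < distOf μ (fun ω => (B ω, Z ω)) (B ω, Z ω) :=
    lt_of_lt_of_le h0 (le_distOf hμ _ ω)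
  exact Real.logb_le_logb_of_le one_lt_two hpos hle

end Aux

lemma concaveOn_logb_two : ConcaveOn ℝ (Set.Ioi 0) (Real.logb 2) := by
  have h := strictConcaveOn_log_Ioi.concaveOn.smul (c := (Real.log 2)⁻¹)
    (by positivity)
  convert h using 1 <;> try rfl
  funext x
  simp [Real.logb, Real.log, div_eq_inv_mul]

section Aux2
variable {Ω : Type*} [Fintype Ω]

lemma condEnt_bool_le_one {β : Type*} [Fintype β] {μ : Ω → ℝ} (hμ : ∀ ω, 0 ≤ μ ω)
    (hs : ∑ ω, μ ω = 1) (B : Ω → Bool) (Z : Ω → β) : condEnt μ B Z ≤ 1 := by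
  set P : Ω → Bool × β := fun ω => (B ω, Z ω) with hP
  set r : Ω → ℝ := fun ω =>
    if distOf μ P (P ω) = 0 then 1 else distOf μ Z (Z ω) / distOf μ P (P ω) with hr
  have hrpos : ∀ ω, 0 < r ω := by
    intro ω
    rw [hr]
    dsimp only
    split
    · exact one_pos
    · rename_i h
      have h1 : 0 < distOf μ P (P ω) := lt_of_le_of_ne (distOf_nonneg hμ P _) (Ne.symm h)
      have h2 : distOf μ P (P ω) ≤ distOf μ Z (Z ω) := by
        refine Finset.sum_le_sum fun ω' _ => ?_
        by_cases hh : P ω' = P ω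
        · rw [if_pos hh, if_pos (congrArg Prod.snd hh)]
        · rw [if_neg hh]; split <;> simp [hμ ω']
      exact div_pos (lt_of_lt_of_le h1 h2) h1
  have hce : condEnt μ B Z = ∑ ω, μ ω * Real.logb 2 (r ω) := by
    unfold condEnt
    rw [rvH_eq_sum, rvH_eq_sum, ← hP]
    rw [neg_sub_neg, ← Finset.sum_sub_distrib]
    refine Finset.sum_congr rfl fun ω _ => ?_
    rcases eq_or_lt_of_le (hμ ω) with h0 | h0
    · rw [← h0]; ring
    · have hPpos : 0 < distOf μ P (P ω) := lt_of_lt_of_le h0 (le_distOf hμ _ ω)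
      have hZpos : 0 < distOf μ Z (Z ω) := lt_of_lt_of_le h0 (le_distOf hμ _ ω)
      rw [hr]
      dsimp only
      rw [if_neg (ne_of_gt hPpos), Real.logb_div (ne_of_gt hZpos) (ne_of_gt hPpos)]
      ring
  have hjensen : ∑ ω, μ ω * Real.logb 2 (r ω) ≤ Real.logb 2 (∑ ω, μ ω * r ω) := by
    have h := concaveOn_logb_two.le_map_sum (t := Finset.univ) (w := μ) (p := r)
      (fun ω _ => hμ ω) hs (fun ω _ => hrpos ω)
    simpa [smul_eq_mul] using h
  have hsum2 : ∑ ω, μ ω * r ω ≤ 2 := by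
    have hfib : ∑ ω, μ ω * r ω
        = ∑ p : Bool × β, ∑ ω ∈ Finset.univ.filter (fun ω => P ω = p), μ ω * r ω := by
      rw [← Finset.sum_fiberwise (g := P) (f := fun ω => μ ω * r ω)]
    rw [hfib]
    have hinner : ∀ p : Bool × β,
        (∑ ω ∈ Finset.univ.filter (fun ω => P ω = p), μ ω * r ω) ≤ distOf μ Z p.2 := by
      intro p
      by_cases hp : distOf μ P p = 0
      · have : ∀ ω ∈ Finset.univ.filter (fun ω => P ω = p), μ ω * r ω = 0 := by
          intro ω hω
          have hωp : P ω = p := by simpa using hω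
          have : μ ω ≤ 0 := by
            have := le_distOf hμ P ω
            rw [hωp, hp] at this; exact this
          have : μ ω = 0 := le_antisymm this (hμ ω)
          rw [this, zero_mul]
        rw [Finset.sum_eq_zero this]
        exact distOf_nonneg hμ Z p.2
      · have hsum : ∑ ω ∈ Finset.univ.filter (fun ω => P ω = p), μ ω * r ω
            = (∑ ω ∈ Finset.univ.filter (fun ω => P ω = p), μ ω)
              * (distOf μ Z p.2 / distOf μ P p) := by
          rw [Finset.sum_mul]
          refine Finset.sum_congr rfl fun ω hω => ?_
          have hωp : P ω = p := by simpa using hω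
          have hz : Z ω = p.2 := congrArg Prod.snd hωp
          rw [hr]; dsimp only
          rw [hωp, hz, if_neg hp]
        have hμp : ∑ ω ∈ Finset.univ.filter (fun ω => P ω = p), μ ω = distOf μ P p := by
          rw [distOf, Finset.sum_filter]
          exact Finset.sum_congr rfl fun ω _ => by congr 1
        rw [hsum, hμp, mul_div_assoc', mul_comm, mul_div_assoc, div_self hp, mul_one]
    calc ∑ p : Bool × β, ∑ ω ∈ Finset.univ.filter (fun ω => P ω = p), μ ω * r ω
        ≤ ∑ p : Bool × β, distOf μ Z p.2 := Finset.sum_le_sum fun p _ => hinner p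
      _ = ∑ b : Bool, ∑ z : β, distOf μ Z z := by rw [Fintype.sum_prod_type]
      _ = 2 := by
          rw [sum_distOf μ Z, hs]
          simp
  have hpos : 0 < ∑ ω, μ ω * r ω := by
    obtain ⟨ω0, hω0⟩ : ∃ ω, 0 < μ ω := by
      by_contra h
      push_neg at h
      have : ∑ ω, μ ω = 0 := Finset.sum_eq_zero fun ω _ => le_antisymm (h ω) (hμ ω)
      rw [hs] at this; norm_num at this
    have h0 : 0 < μ ω0 * r ω0 := mul_pos hω0 (hrpos ω0)
    refine lt_of_lt_of_le h0 (Finset.single_le_sum (f := fun ω => μ ω * r ω)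
      (fun ω _ => mul_nonneg (hμ ω) (hrpos ω).le) (Finset.mem_univ ω0))
  calc condEnt μ B Z = ∑ ω, μ ω * Real.logb 2 (r ω) := hce
    _ ≤ Real.logb 2 (∑ ω, μ ω * r ω) := hjensen
    _ ≤ Real.logb 2 2 := Real.logb_le_logb_of_le one_lt_two hpos hsum2
    _ = 1 := Real.logb_self_eq_one one_lt_two

lemma cMI_comm {α β γ : Type*} [Fintype α] [Fintype β] [Fintype γ] (μ : Ω → ℝ)
    (A : Ω → α) (B : Ω → β) (Z : Ω → γ) : cMI μ A B Z = cMI μ B A Z := by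
  unfold cMI condEnt
  have h1 : rvH μ (fun ω => (A ω, (B ω, Z ω))) = rvH μ (fun ω => (B ω, (A ω, Z ω))) := by
    refine rvH_congr μ fun ω ω' => ?_
    simp only [Prod.mk.injEq]
    tauto
  have h2 : rvH μ (fun ω => (A ω, Z ω)) = rvH μ (fun ω => (A ω, Z ω)) := rfl
  rw [h1]
  ring

lemma cMI_congr3 {α β γ γ' : Type*} [Fintype α] [Fintype β] [Fintype γ] [Fintype γ']
    (μ : Ω → ℝ) (A : Ω → α) (B : Ω → β) {Z : Ω → γ} {Z' : Ω → γ'}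
    (h : ∀ ω ω', Z ω = Z ω' ↔ Z' ω = Z' ω') : cMI μ A B Z = cMI μ A B Z' := by
  unfold cMI condEnt
  rw [rvH_congr μ (f := fun ω => (A ω, Z ω)) (g := fun ω => (A ω, Z' ω))
      (fun ω ω' => by simp only [Prod.mk.injEq]; have := h ω ω'; tauto),
    rvH_congr μ (f := Z) (g := Z') h,
    rvH_congr μ (f := fun ω => (A ω, (B ω, Z ω))) (g := fun ω => (A ω, (B ω, Z' ω)))
      (fun ω ω' => by simp only [Prod.mk.injEq]; have := h ω ω'; tauto),
    rvH_congr μ (f := fun ω => (B ω, Z ω)) (g := fun ω => (B ω, Z' ω))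
      (fun ω ω' => by simp only [Prod.mk.injEq]; have := h ω ω'; tauto)]

lemma cMI_le_one {α γ : Type*} [Fintype α] [Fintype γ] {μ : Ω → ℝ} (hμ : ∀ ω, 0 ≤ μ ω)
    (hs : ∑ ω, μ ω = 1) (A : Ω → α) (B : Ω → Bool) (Z : Ω → γ) : cMI μ A B Z ≤ 1 := by
  rw [cMI_comm]
  unfold cMI
  have h1 := condEnt_nonneg hμ B (fun ω => (A ω, Z ω))
  have h2 := condEnt_bool_le_one hμ hs B Z
  linarith

end Aux2

/-- Internal information cost of a private-coin protocol is at most its communication: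
if in each round, conditioned on the prefix, the transmitted bit reveals information to
only one of the parties, then I(X; Π | Y) + I(Y; Π | X) ≤ C. -/
theorem info_cost_le_communication {Ω 𝒳 𝒴 : Type*} [Fintype Ω] [Fintype 𝒳] [Fintype 𝒴]
    (μ : Ω → ℝ) (hμ : ∀ ω, 0 ≤ μ ω) (hs : ∑ ω, μ ω = 1)
    {C : ℕ} (X : Ω → 𝒳) (Y : Ω → 𝒴) (T : Ω → (Fin C → Bool))
    (hturn : ∀ i : Fin C,
      cMI μ (fun ω => T ω i) Y
          (fun ω => (X ω, fun j : Fin i.1 => T ω ⟨j.1, j.2.trans i.2⟩)) = 0 ∨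
      cMI μ (fun ω => T ω i) X
          (fun ω => (Y ω, fun j : Fin i.1 => T ω ⟨j.1, j.2.trans i.2⟩)) = 0) :
    cMI μ X T Y + cMI μ Y T X ≤ (C : ℝ) := by
  classical
  set pre : ℕ → Ω → Fin C → Bool := fun k ω j => if j.1 < k then T ω j else false with hpre
  -- fibers of (T_i, pre i) agree with fibers of pre (i+1)
  have hfib : ∀ (i : Fin C) (ω ω' : Ω),
      (T ω i = T ω' i ∧ pre i.1 ω = pre i.1 ω') ↔ pre (i.1+1) ω = pre (i.1+1) ω' := by
    intro i ω ω'
    constructor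
    · rintro ⟨h1, h2⟩
      funext j
      simp only [hpre]
      by_cases hj : j.1 < i.1 + 1
      · rw [if_pos hj, if_pos hj]
        rcases lt_or_eq_of_le (Nat.lt_succ_iff.mp hj) with hj' | hj'
        · have := congrFun h2 j
          simpa [hpre, hj'] using this
        · have hji : j = i := Fin.ext hj'
          rw [hji]; exact h1
      · rw [if_neg hj, if_neg hj]
    · intro h
      constructor
      · have := congrFun h i
        simpa [hpre, Nat.lt_succ_self] using this
      · funext j
        simp only [hpre]
        by_cases hj : j.1 < i.1
        · rw [if_pos hj, if_pos hj]
          have := congrFun h j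
          simpa [hpre, Nat.lt_succ_of_lt hj] using this
        · rw [if_neg hj, if_neg hj]
  -- fibers of padded prefix agree with fibers of the dependent prefix
  have hdep : ∀ (i : Fin C) (ω ω' : Ω),
      ((fun j : Fin i.1 => T ω ⟨j.1, j.2.trans i.2⟩)
        = (fun j : Fin i.1 => T ω' ⟨j.1, j.2.trans i.2⟩))
      ↔ pre i.1 ω = pre i.1 ω' := by
    intro i ω ω'
    constructor
    · intro h
      funext j
      simp only [hpre]
      by_cases hj : j.1 < i.1
      · rw [if_pos hj, if_pos hj]
        exact congrFun h ⟨j.1, hj⟩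
      · rw [if_neg hj, if_neg hj]
    · intro h
      funext j
      have := congrFun h ⟨j.1, j.2.trans i.2⟩
      simpa [hpre, j.2] using this
  set u : ℕ → ℝ := fun k => rvH μ (fun ω => (X ω, (Y ω, pre k ω))) with hu
  set v : ℕ → ℝ := fun k => rvH μ (fun ω => (Y ω, pre k ω)) with hv
  set u' : ℕ → ℝ := fun k => rvH μ (fun ω => (Y ω, (X ω, pre k ω))) with hu'
  set v' : ℕ → ℝ := fun k => rvH μ (fun ω => (X ω, pre k ω)) with hv'
  have hstep : ∀ i : Fin C,
      cMI μ X (fun ω => T ω i) (fun ω => (Y ω, pre i.1 ω))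
        = (u i.1 - u (i.1+1)) - (v i.1 - v (i.1+1)) := by
    intro i
    have e1 : rvH μ (fun ω => (X ω, (T ω i, (Y ω, pre i.1 ω))))
        = rvH μ (fun ω => (X ω, (Y ω, pre (i.1+1) ω))) := by
      refine rvH_congr μ fun ω ω' => ?_
      have hf := hfib i ω ω'
      simp only [Prod.mk.injEq]
      tauto
    have e2 : rvH μ (fun ω => (T ω i, (Y ω, pre i.1 ω)))
        = rvH μ (fun ω => (Y ω, pre (i.1+1) ω)) := by
      refine rvH_congr μ fun ω ω' => ?_
      have hf := hfib i ω ω'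
      simp only [Prod.mk.injEq]
      tauto
    simp only [cMI, condEnt, hu, hv]
    rw [e1, e2]
    ring
  have hstep' : ∀ i : Fin C,
      cMI μ Y (fun ω => T ω i) (fun ω => (X ω, pre i.1 ω))
        = (u' i.1 - u' (i.1+1)) - (v' i.1 - v' (i.1+1)) := by
    intro i
    have e1 : rvH μ (fun ω => (Y ω, (T ω i, (X ω, pre i.1 ω))))
        = rvH μ (fun ω => (Y ω, (X ω, pre (i.1+1) ω))) := by
      refine rvH_congr μ fun ω ω' => ?_
      have hf := hfib i ω ω'
      simp only [Prod.mk.injEq]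
      tauto
    have e2 : rvH μ (fun ω => (T ω i, (X ω, pre i.1 ω)))
        = rvH μ (fun ω => (X ω, pre (i.1+1) ω)) := by
      refine rvH_congr μ fun ω ω' => ?_
      have hf := hfib i ω ω'
      simp only [Prod.mk.injEq]
      tauto
    simp only [cMI, condEnt, hu', hv']
    rw [e1, e2]
    ring
  have htel : ∀ (w : ℕ → ℝ), ∑ i : Fin C, (w i.1 - w (i.1+1)) = w 0 - w C := by
    intro w
    rw [Fin.sum_univ_eq_sum_range (fun i => w i - w (i+1)) C]
    exact Finset.sum_range_sub' w C
  have hpre0 : ∀ ω ω' : Ω, pre 0 ω = pre 0 ω' := by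
    intro ω ω'; funext j; simp [hpre]
  have hpreC : ∀ ω ω' : Ω, pre C ω = pre C ω' ↔ T ω = T ω' := by
    intro ω ω'
    constructor
    · intro h
      funext j
      have := congrFun h j
      simpa [hpre, j.2] using this
    · intro h
      funext j
      simp [hpre, h]
  have hu0 : u 0 = rvH μ (fun ω => (X ω, Y ω)) := by
    simp only [hu]
    refine rvH_congr μ fun ω ω' => ?_
    have := hpre0 ω ω'
    simp only [Prod.mk.injEq]
    tauto
  have hv0 : v 0 = rvH μ Y := by
    simp only [hv]
    refine rvH_congr μ fun ω ω' => ?_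
    have := hpre0 ω ω'
    simp only [Prod.mk.injEq]
    tauto
  have huC : u C = rvH μ (fun ω => (X ω, (T ω, Y ω))) := by
    simp only [hu]
    refine rvH_congr μ fun ω ω' => ?_
    have := hpreC ω ω'
    simp only [Prod.mk.injEq]
    tauto
  have hvC : v C = rvH μ (fun ω => (T ω, Y ω)) := by
    simp only [hv]
    refine rvH_congr μ fun ω ω' => ?_
    have := hpreC ω ω'
    simp only [Prod.mk.injEq]
    tauto
  have hu'0 : u' 0 = rvH μ (fun ω => (Y ω, X ω)) := by
    simp only [hu']
    refine rvH_congr μ fun ω ω' => ?_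
    have := hpre0 ω ω'
    simp only [Prod.mk.injEq]
    tauto
  have hv'0 : v' 0 = rvH μ X := by
    simp only [hv']
    refine rvH_congr μ fun ω ω' => ?_
    have := hpre0 ω ω'
    simp only [Prod.mk.injEq]
    tauto
  have hu'C : u' C = rvH μ (fun ω => (Y ω, (T ω, X ω))) := by
    simp only [hu']
    refine rvH_congr μ fun ω ω' => ?_
    have := hpreC ω ω'
    simp only [Prod.mk.injEq]
    tauto
  have hv'C : v' C = rvH μ (fun ω => (T ω, X ω)) := by
    simp only [hv']
    refine rvH_congr μ fun ω ω' => ?_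
    have := hpreC ω ω'
    simp only [Prod.mk.injEq]
    tauto
  have hchain1 : cMI μ X T Y
      = ∑ i : Fin C, cMI μ X (fun ω => T ω i) (fun ω => (Y ω, pre i.1 ω)) := by
    rw [Finset.sum_congr rfl (fun i _ => hstep i), Finset.sum_sub_distrib,
      htel u, htel v, hu0, huC, hv0, hvC]
    simp only [cMI, condEnt]
    ring
  have hchain2 : cMI μ Y T X
      = ∑ i : Fin C, cMI μ Y (fun ω => T ω i) (fun ω => (X ω, pre i.1 ω)) := by
    rw [Finset.sum_congr rfl (fun i _ => hstep' i), Finset.sum_sub_distrib,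
      htel u', htel v', hu'0, hu'C, hv'0, hv'C]
    simp only [cMI, condEnt]
    ring
  have hround : ∀ i : Fin C,
      cMI μ X (fun ω => T ω i) (fun ω => (Y ω, pre i.1 ω))
      + cMI μ Y (fun ω => T ω i) (fun ω => (X ω, pre i.1 ω)) ≤ 1 := by
    intro i
    rcases hturn i with h | h
    · have hz : cMI μ (fun ω => T ω i) Y (fun ω => (X ω, pre i.1 ω)) = 0 := by
        have hc := cMI_congr3 μ (fun ω => T ω i) Y
          (Z := fun ω => (X ω, fun j : Fin i.1 => T ω ⟨j.1, j.2.trans i.2⟩))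
          (Z' := fun ω => (X ω, pre i.1 ω))
          (fun ω ω' => by
            have := hdep i ω ω'
            simp only [Prod.mk.injEq]
            tauto)
        rw [← hc]; exact h
      have hb : cMI μ Y (fun ω => T ω i) (fun ω => (X ω, pre i.1 ω)) = 0 := by
        rw [cMI_comm]; exact hz
      have ha := cMI_le_one hμ hs X (fun ω => T ω i) (fun ω => (Y ω, pre i.1 ω))
      linarith
    · have hz : cMI μ (fun ω => T ω i) X (fun ω => (Y ω, pre i.1 ω)) = 0 := by
        have hc := cMI_congr3 μ (fun ω => T ω i) X
          (Z := fun ω => (Y ω, fun j : Fin i.1 => T ω ⟨j.1, j.2.trans i.2⟩))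
          (Z' := fun ω => (Y ω, pre i.1 ω))
          (fun ω ω' => by
            have := hdep i ω ω'
            simp only [Prod.mk.injEq]
            tauto)
        rw [← hc]; exact h
      have ha : cMI μ X (fun ω => T ω i) (fun ω => (Y ω, pre i.1 ω)) = 0 := by
        rw [cMI_comm]; exact hz
      have hb := cMI_le_one hμ hs Y (fun ω => T ω i) (fun ω => (X ω, pre i.1 ω))
      linarith
  calc cMI μ X T Y + cMI μ Y T X
      = ∑ i : Fin C, (cMI μ X (fun ω => T ω i) (fun ω => (Y ω, pre i.1 ω))
          + cMI μ Y (fun ω => T ω i) (fun ω => (X ω, pre i.1 ω))) := by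
        rw [hchain1, hchain2, Finset.sum_add_distrib]
    _ ≤ ∑ _i : Fin C, (1:ℝ) := Finset.sum_le_sum fun i _ => hround i
    _ = C := by simp
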